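/- In the 1-D Fourier sampling setting, let y ∈ ℝ^n, λ > 0, and let e₁ ∈ ℝ^n be the first standard basis vector (so that ⟨φ(x), e₁⟩ = 1 for every x ∈ 𝕋). If m is a finite nonnegative Borel measure on 𝕋 with Φm = y − λ e₁, then m minimizes the Blasso objective J_y over all finite signed Borel measures on 𝕋; consequently every minimizer m' of J_y satisfies Φm' = y − λ e₁. (This is the saturation case E_y = 𝕋, η_y ≡ 1, in the proof of Theorem 5.2, where μ̂(y) = y − λ δ₁.) -/

import Mathlib

open MeasureTheory
open scoped InnerProductSpace

instance : Fact ((0 : ℝ) < 1) := ⟨one_pos⟩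

/-- The 1-D Fourier sampling feature map
`φ(x) = (1, (√2 sin(2πℓx))_{ℓ=1}^{f_c}, (√2 cos(2πℓx))_{ℓ=1}^{f_c})` on `𝕋 = ℝ/ℤ`,
realized via the exponential map `toCircle x = exp(2πix)`. -/
noncomputable def fourierPhi (fc : ℕ) (x : AddCircle (1 : ℝ)) :
    EuclideanSpace ℝ (Unit ⊕ Fin fc ⊕ Fin fc) :=
  WithLp.toLp 2 fun (i : Unit ⊕ Fin fc ⊕ Fin fc) => match i with
    | Sum.inl _ => 1
    | Sum.inr (Sum.inl ℓ) =>
        Real.sqrt 2 * (((AddCircle.toCircle x : ℂ)) ^ ((ℓ : ℕ) + 1)).im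
    | Sum.inr (Sum.inr ℓ) =>
        Real.sqrt 2 * (((AddCircle.toCircle x : ℂ)) ^ ((ℓ : ℕ) + 1)).re

/-- `Φ m = ∫ φ dm` for a finite signed Borel measure `m`, via the Jordan decomposition. -/
noncomputable def blassoPhi {Ω : Type*} [MeasurableSpace Ω] {ι : Type*} [Fintype ι]
    (φ : Ω → EuclideanSpace ℝ ι) (m : SignedMeasure Ω) : EuclideanSpace ℝ ι :=
  (∫ x, φ x ∂m.toJordanDecomposition.posPart) -
    ∫ x, φ x ∂m.toJordanDecomposition.negPart

/-- The Blasso objective `J_y(m) = (1/2)‖Φm − y‖₂² + λ|m|_TV`. -/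
noncomputable def blassoObj {Ω : Type*} [MeasurableSpace Ω] {ι : Type*} [Fintype ι]
    (φ : Ω → EuclideanSpace ℝ ι) (lam : ℝ) (y : EuclideanSpace ℝ ι)
    (m : SignedMeasure Ω) : ℝ :=
  (1 / 2) * ‖blassoPhi φ m - y‖ ^ 2 + lam * (m.totalVariation Set.univ).toReal

section Aux

open scoped InnerProductSpace

lemma fourierPhi_continuous (fc : ℕ) : Continuous (fourierPhi fc) := by
  have h : Continuous (fun x : AddCircle (1 : ℝ) =>
      (fun i => fourierPhi fc x i : (Unit ⊕ Fin fc ⊕ Fin fc) → ℝ)) := by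
    apply continuous_pi
    rintro (⟨⟩ | ℓ | ℓ)
    · simpa [fourierPhi] using continuous_const
    · simp only [fourierPhi]
      exact continuous_const.mul (Complex.continuous_im.comp
        ((continuous_subtype_val.comp AddCircle.continuous_toCircle).pow _))
    · simp only [fourierPhi]
      exact continuous_const.mul (Complex.continuous_re.comp
        ((continuous_subtype_val.comp AddCircle.continuous_toCircle).pow _))
  exact (PiLp.continuous_toLp 2 _).comp h

lemma fourierPhi_integrable (fc : ℕ) (ν : Measure (AddCircle (1 : ℝ))) [IsFiniteMeasure ν] :
    Integrable (fourierPhi fc) ν :=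
  (fourierPhi_continuous fc).integrable_of_hasCompactSupport
    (HasCompactSupport.of_compactSpace _)

/-- Inner product of `e₁` with `Φμ`. -/
lemma inner_e1_blassoPhi {fc : ℕ} (μ : SignedMeasure (AddCircle (1 : ℝ))) :
    ⟪(EuclideanSpace.single (Sum.inl Unit.unit) (1 : ℝ) :
        EuclideanSpace ℝ (Unit ⊕ Fin fc ⊕ Fin fc)), blassoPhi (fourierPhi fc) μ⟫_ℝ
      = (μ.toJordanDecomposition.posPart Set.univ).toReal
        - (μ.toJordanDecomposition.negPart Set.univ).toReal := by
  have key : ∀ (ν : Measure (AddCircle (1 : ℝ))) [IsFiniteMeasure ν],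
      ⟪(EuclideanSpace.single (Sum.inl Unit.unit) (1 : ℝ) :
          EuclideanSpace ℝ (Unit ⊕ Fin fc ⊕ Fin fc)), ∫ x, fourierPhi fc x ∂ν⟫_ℝ
        = (ν Set.univ).toReal := by
    intro ν _
    rw [← integral_inner (fourierPhi_integrable fc ν)]
    have h1 : ∀ x : AddCircle (1 : ℝ),
        ⟪(EuclideanSpace.single (Sum.inl Unit.unit) (1 : ℝ) :
            EuclideanSpace ℝ (Unit ⊕ Fin fc ⊕ Fin fc)), fourierPhi fc x⟫_ℝ = 1 := by
      intro x
      simp [EuclideanSpace.inner_single_left, fourierPhi]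
    simp [h1, measureReal_def]
  rw [blassoPhi, inner_sub_right, key, key]

lemma jordan_of_measure {Ω : Type*} [MeasurableSpace Ω] (m : Measure Ω) [IsFiniteMeasure m] :
    m.toSignedMeasure.toJordanDecomposition
      = ⟨m, 0, Measure.MutuallySingular.zero_right⟩ := by
  apply JordanDecomposition.toSignedMeasure_injective
  rw [SignedMeasure.toSignedMeasure_toJordanDecomposition]
  show m.toSignedMeasure = m.toSignedMeasure - (0 : Measure Ω).toSignedMeasure
  rw [Measure.toSignedMeasure_zero, sub_zero]

lemma totalVariation_toReal {Ω : Type*} [MeasurableSpace Ω] (μ : SignedMeasure Ω) :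
    (μ.totalVariation Set.univ).toReal
      = (μ.toJordanDecomposition.posPart Set.univ).toReal
        + (μ.toJordanDecomposition.negPart Set.univ).toReal := by
  rw [SignedMeasure.totalVariation, Measure.add_apply,
    ENNReal.toReal_add (measure_ne_top _ _) (measure_ne_top _ _)]

end Aux

/-- In 1-D Fourier sampling, if `m` is a finite nonnegative Borel
measure on `𝕋` with `Φm = y − λe₁` (`e₁` the first standard basis vector, so
`⟨φ(x), e₁⟩ = 1` for all `x`), then `m` minimizes the Blasso objective `J_y` over all
finite signed Borel measures; consequently every minimizer `m'` of `J_y` satisfies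
`Φm' = y − λe₁`. -/
theorem fourier_blasso_saturated_case {fc : ℕ}
    (y : EuclideanSpace ℝ (Unit ⊕ Fin fc ⊕ Fin fc)) (lam : ℝ) (hlam : 0 < lam)
    (e₁ : EuclideanSpace ℝ (Unit ⊕ Fin fc ⊕ Fin fc))
    (he₁ : e₁ = EuclideanSpace.single (Sum.inl Unit.unit) (1 : ℝ))
    (m : Measure (AddCircle (1 : ℝ))) [IsFiniteMeasure m]
    (hm : blassoPhi (fourierPhi fc) m.toSignedMeasure = y - lam • e₁) :
    (∀ μ : SignedMeasure (AddCircle (1 : ℝ)),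
        blassoObj (fourierPhi fc) lam y m.toSignedMeasure ≤ blassoObj (fourierPhi fc) lam y μ) ∧
      ∀ m' : SignedMeasure (AddCircle (1 : ℝ)),
        (∀ μ : SignedMeasure (AddCircle (1 : ℝ)),
          blassoObj (fourierPhi fc) lam y m' ≤ blassoObj (fourierPhi fc) lam y μ) →
        blassoPhi (fourierPhi fc) m' = y - lam • e₁ := by
  subst he₁
  set e : EuclideanSpace ℝ (Unit ⊕ Fin fc ⊕ Fin fc) :=
    EuclideanSpace.single (Sum.inl Unit.unit) (1 : ℝ) with he
  have hne : ‖e‖ = 1 := by rw [he, EuclideanSpace.norm_single]; simp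
  have hee : ⟪e, e⟫_ℝ = 1 := by
    rw [real_inner_self_eq_norm_sq, hne]; norm_num
  -- total variation of `m`
  have hmTV : (m.toSignedMeasure.totalVariation Set.univ).toReal = (m Set.univ).toReal := by
    rw [totalVariation_toReal, jordan_of_measure]; simp
  -- mass of `m`
  have hmass : (m Set.univ).toReal = ⟪e, y⟫_ℝ - lam := by
    have h := inner_e1_blassoPhi (fc := fc) m.toSignedMeasure
    rw [jordan_of_measure, hm] at h
    simp only [← he, inner_sub_right, real_inner_smul_right, hee] at h
    simp only [Measure.coe_zero, Pi.zero_apply, ENNReal.toReal_zero, sub_zero] at h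
    rw [← h]; ring
  -- value of the objective at `m`
  have hJm : blassoObj (fourierPhi fc) lam y m.toSignedMeasure
      = lam * ⟪e, y⟫_ℝ - lam ^ 2 / 2 := by
    rw [blassoObj, hm, hmTV, hmass]
    have hn : ‖y - lam • e - y‖ = lam := by
      have : y - lam • e - y = -(lam • e) := by abel
      rw [this, norm_neg, norm_smul, hne, mul_one, Real.norm_eq_abs, abs_of_pos hlam]
    rw [hn]; ring
  -- key lower bound for every signed measure
  have keylow : ∀ μ : SignedMeasure (AddCircle (1 : ℝ)),
      1 / 2 * ‖blassoPhi (fourierPhi fc) μ - y + lam • e‖ ^ 2 - lam ^ 2 / 2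
          + lam * ⟪e, y⟫_ℝ
        ≤ blassoObj (fourierPhi fc) lam y μ := by
    intro μ
    set v := blassoPhi (fourierPhi fc) μ - y with hv
    have hTV : ⟪e, v⟫_ℝ + ⟪e, y⟫_ℝ ≤ (μ.totalVariation Set.univ).toReal := by
      have h1 : ⟪e, v⟫_ℝ + ⟪e, y⟫_ℝ = ⟪e, blassoPhi (fourierPhi fc) μ⟫_ℝ := by
        rw [hv, inner_sub_right]; ring
      rw [h1, inner_e1_blassoPhi, totalVariation_toReal]
      have h2 := ENNReal.toReal_nonneg (a := μ.toJordanDecomposition.negPart Set.univ)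
      linarith
    have hexp : ‖v + lam • e‖ ^ 2 = ‖v‖ ^ 2 + 2 * (lam * ⟪e, v⟫_ℝ) + lam ^ 2 := by
      rw [norm_add_sq_real, real_inner_smul_right, real_inner_comm, norm_smul, hne,
        mul_one, Real.norm_eq_abs, sq_abs]
    have hprod : lam * (⟪e, v⟫_ℝ + ⟪e, y⟫_ℝ)
        ≤ lam * (μ.totalVariation Set.univ).toReal :=
      mul_le_mul_of_nonneg_left hTV hlam.le
    rw [blassoObj, ← hv]
    nlinarith [hexp, hprod]
  constructor
  · intro μ
    have h1 := keylow μ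
    have h2 : (0 : ℝ) ≤ ‖blassoPhi (fourierPhi fc) μ - y + lam • e‖ ^ 2 := sq_nonneg _
    rw [hJm]; linarith
  · intro m' hmin
    have h1 := hmin m.toSignedMeasure
    have h2 := keylow m'
    rw [hJm] at h1
    have h3 : ‖blassoPhi (fourierPhi fc) m' - y + lam • e‖ ^ 2 ≤ 0 := by linarith
    have h4 : blassoPhi (fourierPhi fc) m' - y + lam • e = 0 := by
      have h5 : ‖blassoPhi (fourierPhi fc) m' - y + lam • e‖ = 0 := by
        nlinarith [norm_nonneg (blassoPhi (fourierPhi fc) m' - y + lam • e)]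
      exact norm_eq_zero.mp h5
    rw [sub_add, sub_eq_zero] at h4
    exact h4
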